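/- Let n ≥ 1, γ > 0, let y₁, …, yₙ ∈ ℝ, x₁, …, xₙ ∈ ℝ^p, and let w₁, …, wₙ ≥ 0. Let ρ : ℝ × ℝ → ℝ be such that for each a ∈ ℝ the function t ↦ ρ(a,t) is three times continuously differentiable and satisfies |∂³_t ρ(a,t)| ≤ γ ∂²_t ρ(a,t) for all t ∈ ℝ. Define the Mallows loss L(θ) = (1/n) Σᵢ ρ(yᵢ, ⟨xᵢ, θ⟩) wᵢ for θ ∈ ℝ^p. Then L is (γ·maxᵢ‖xᵢ‖₂, 2)-self-concordant, i.e. |∇³L(θ)[v,u,u]| ≤ γ·(maxᵢ‖xᵢ‖₂)·(uᵀ∇²L(θ)u)·‖v‖₂ for all θ, u, v ∈ ℝ^p. -/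

import Mathlib

open scoped RealInnerProductSpace

lemma key_ifd {p n : ℕ} (x : Fin n → EuclideanSpace ℝ (Fin p)) (g : Fin n → ℝ → ℝ)
    (hg : ∀ i, ContDiff ℝ 3 (g i)) (k : ℕ) (hk : k ≤ 3)
    (θ : EuclideanSpace ℝ (Fin p)) (m : Fin k → EuclideanSpace ℝ (Fin p)) :
    iteratedFDeriv ℝ k (fun θ => ∑ i, g i ⟪x i, θ⟫) θ m
      = ∑ i, (∏ j, ⟪x i, m j⟫) * iteratedDeriv k (g i) ⟪x i, θ⟫ := by
  have hfun : (fun θ => ∑ i, g i ⟪x i, θ⟫)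
      = (fun θ => ∑ i, (g i ∘ (innerSL ℝ (x i))) θ) := by
    funext θ; simp [Function.comp]
  rw [hfun, iteratedFDeriv_sum (fun i _ =>
    (((hg i).of_le (by exact_mod_cast hk)).comp (innerSL ℝ (x i)).contDiff))]
  simp only [Finset.sum_apply, ContinuousMultilinearMap.sum_apply]
  refine Finset.sum_congr rfl fun i _ => ?_
  rw [(innerSL ℝ (x i)).iteratedFDeriv_comp_right ((hg i).of_le (by exact_mod_cast hk)) θ le_rfl]
  rw [ContinuousMultilinearMap.compContinuousLinearMap_apply]
  rw [iteratedFDeriv_apply_eq_iteratedDeriv_mul_prod]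
  simp [smul_eq_mul]

/-- if `t ↦ ρ(a,t)` is `(γ,2)`-self-concordant for every `a`, then the Mallows
loss `L(θ) = (1/n) ∑ᵢ ρ(yᵢ, ⟨xᵢ,θ⟩) wᵢ` is `(γ maxᵢ ‖xᵢ‖, 2)`-self-concordant. -/
theorem stmt_12 {p : ℕ} (n : ℕ) (hn : 1 ≤ n) (γ : ℝ) (hγ : 0 < γ)
    (y : Fin n → ℝ) (x : Fin n → EuclideanSpace ℝ (Fin p)) (w : Fin n → ℝ)
    (hw : ∀ i, 0 ≤ w i)
    (ρ : ℝ → ℝ → ℝ)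
    (hρC3 : ∀ a : ℝ, ContDiff ℝ 3 (ρ a))
    (hρSC : ∀ (a t : ℝ), |iteratedDeriv 3 (ρ a) t| ≤ γ * iteratedDeriv 2 (ρ a) t)
    (L : EuclideanSpace ℝ (Fin p) → ℝ)
    (hL : ∀ θ, L θ = (1 / (n : ℝ)) * ∑ i, ρ (y i) ⟪x i, θ⟫ * w i) :
    ∀ θ u v : EuclideanSpace ℝ (Fin p),
      |iteratedFDeriv ℝ 3 L θ ![v, u, u]| ≤
        γ * (⨆ i, ‖x i‖) * iteratedFDeriv ℝ 2 L θ ![u, u] * ‖v‖ := by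
  intro θ u v
  set g : Fin n → ℝ → ℝ := fun i t => (1 / (n : ℝ) * w i) * ρ (y i) t with hg_def
  have hg : ∀ i, ContDiff ℝ 3 (g i) := fun i => contDiff_const.mul (hρC3 (y i))
  have hLfun : L = fun θ => ∑ i, g i ⟪x i, θ⟫ := by
    funext θ; rw [hL θ, Finset.mul_sum]
    exact Finset.sum_congr rfl fun i _ => by simp [hg_def]; ring
  have hgderiv : ∀ (i) (k : ℕ), k ≤ 3 → ∀ t : ℝ,
      iteratedDeriv k (g i) t = (1 / (n : ℝ) * w i) * iteratedDeriv k (ρ (y i)) t := by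
    intro i k hk t
    rw [← iteratedDerivWithin_univ, ← iteratedDerivWithin_univ,
      iteratedDerivWithin_const_mul (Set.mem_univ t) uniqueDiffOn_univ _
        (((hρC3 (y i)).of_le (show (k : WithTop ℕ∞) ≤ 3 by exact_mod_cast hk)).contDiffWithinAt)]
  have h3 := key_ifd x g hg 3 (le_refl 3) θ ![v, u, u]
  have h2 := key_ifd x g hg 2 (by norm_num) θ ![u, u]
  rw [hLfun, h3, h2]
  simp only [Fin.prod_univ_three, Fin.prod_univ_two, Matrix.cons_val_zero, Matrix.cons_val_one,
    Matrix.head_cons, Matrix.cons_val_two, Matrix.tail_cons]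
  set M := ⨆ i, ‖x i‖ with hM_def
  have hM : ∀ i, ‖x i‖ ≤ M := fun i =>
    le_ciSup (f := fun i => ‖x i‖) (Set.Finite.bddAbove (Set.finite_range _)) i
  have hc : ∀ i : Fin n, (0:ℝ) ≤ 1 / (n : ℝ) * w i := fun i =>
    mul_nonneg (by positivity) (hw i)
  have hD2 : ∀ i : Fin n, 0 ≤ iteratedDeriv 2 (ρ (y i)) ⟪x i, θ⟫ := by
    intro i
    nlinarith [hρSC (y i) ⟪x i, θ⟫, abs_nonneg (iteratedDeriv 3 (ρ (y i)) ⟪x i, θ⟫)]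
  calc |∑ i, ⟪x i, v⟫ * ⟪x i, u⟫ * ⟪x i, u⟫ * iteratedDeriv 3 (g i) ⟪x i, θ⟫|
      ≤ ∑ i, |⟪x i, v⟫ * ⟪x i, u⟫ * ⟪x i, u⟫ * iteratedDeriv 3 (g i) ⟪x i, θ⟫| :=
        Finset.abs_sum_le_sum_abs _ _
    _ ≤ ∑ i, γ * M * ‖v‖ *
          (⟪x i, u⟫ * ⟪x i, u⟫ * iteratedDeriv 2 (g i) ⟪x i, θ⟫) := by
        refine Finset.sum_le_sum fun i _ => ?_
        rw [hgderiv i 3 (by norm_num), hgderiv i 2 (by norm_num)]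
        have habs : |⟪x i, v⟫| ≤ M * ‖v‖ :=
          (abs_real_inner_le_norm (x i) v).trans
            (mul_le_mul_of_nonneg_right (hM i) (norm_nonneg v))
        have hMv : (0:ℝ) ≤ M * ‖v‖ :=
          mul_nonneg ((norm_nonneg (x i)).trans (hM i)) (norm_nonneg v)
        have h3i := hρSC (y i) ⟪x i, θ⟫
        have key := mul_le_mul habs h3i (abs_nonneg _) hMv
        rw [abs_mul, abs_mul, abs_mul, abs_mul, abs_of_nonneg (hc i)]
        calc |⟪x i, v⟫| * |⟪x i, u⟫| * |⟪x i, u⟫| *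
              (1 / (n:ℝ) * w i * |iteratedDeriv 3 (ρ (y i)) ⟪x i, θ⟫|)
            = (⟪x i, u⟫ * ⟪x i, u⟫ * (1 / (n:ℝ) * w i)) *
              (|⟪x i, v⟫| * |iteratedDeriv 3 (ρ (y i)) ⟪x i, θ⟫|) := by
              rw [← abs_mul_abs_self ⟪x i, u⟫]; ring
          _ ≤ (⟪x i, u⟫ * ⟪x i, u⟫ * (1 / (n:ℝ) * w i)) *
              (M * ‖v‖ * (γ * iteratedDeriv 2 (ρ (y i)) ⟪x i, θ⟫)) :=
              mul_le_mul_of_nonneg_left key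
                (mul_nonneg (mul_self_nonneg _) (hc i))
          _ = γ * M * ‖v‖ * (⟪x i, u⟫ * ⟪x i, u⟫ *
              (1 / (n:ℝ) * w i * iteratedDeriv 2 (ρ (y i)) ⟪x i, θ⟫)) := by ring
    _ = γ * M * (∑ i, ⟪x i, u⟫ * ⟪x i, u⟫ * iteratedDeriv 2 (g i) ⟪x i, θ⟫) * ‖v‖ := by
        rw [← Finset.mul_sum]; ring
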